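/- The real vector space of linear maps T : ℝ^{n×n} → ℝ^{n×n} satisfying T(σ·X) = σ·T(X) for all σ ∈ S_n and X ∈ ℝ^{n×n} has dimension exactly 14 when n = 3, and dimension exactly 8 when n = 2. -/

import Mathlib

open Matrix

namespace IGN2small

variable (n : ℕ)

/-- The action of `Sₙ` on `n × n` matrices: `(σ · X) i j = X (σ⁻¹ i) (σ⁻¹ j)`. -/
def act (σ : Equiv.Perm (Fin n)) (X : Matrix (Fin n) (Fin n) ℝ) :
    Matrix (Fin n) (Fin n) ℝ :=
  Matrix.of fun i j => X (σ⁻¹ i) (σ⁻¹ j)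

theorem act_add (σ : Equiv.Perm (Fin n)) (X Y : Matrix (Fin n) (Fin n) ℝ) :
    act n σ (X + Y) = act n σ X + act n σ Y := by
  ext i j; simp [act]

theorem act_smul (σ : Equiv.Perm (Fin n)) (c : ℝ) (X : Matrix (Fin n) (Fin n) ℝ) :
    act n σ (c • X) = c • act n σ X := by
  ext i j; simp [act]

/-- The space of `Sₙ`-equivariant linear endomorphisms of `ℝⁿˣⁿ`. -/
noncomputable def EquivariantMaps :
    Submodule ℝ (Matrix (Fin n) (Fin n) ℝ →ₗ[ℝ] Matrix (Fin n) (Fin n) ℝ) where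
  carrier := {T | ∀ (σ : Equiv.Perm (Fin n)) (X : Matrix (Fin n) (Fin n) ℝ),
    T (act n σ X) = act n σ (T X)}
  zero_mem' := by
    intro σ X
    simp only [LinearMap.zero_apply]
    ext i j; simp [act]
  add_mem' := by
    intro T T' hT hT' σ X
    simp [LinearMap.add_apply, hT σ X, hT' σ X, act_add]
  smul_mem' := by
    intro c T hT σ X
    simp [LinearMap.smul_apply, hT σ X, act_smul]


abbrev Idx := Fin n × Fin n × Fin n × Fin n

def permIdx (σ : Equiv.Perm (Fin n)) (a : Idx n) : Idx n :=
  (σ a.1, σ a.2.1, σ a.2.2.1, σ a.2.2.2)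

lemma permIdx_mul (σ τ : Equiv.Perm (Fin n)) (a : Idx n) :
    permIdx n σ (permIdx n τ a) = permIdx n (σ * τ) a := by
  simp [permIdx]

instance idxSetoid : Setoid (Idx n) where
  r a b := ∃ σ : Equiv.Perm (Fin n), permIdx n σ a = b
  iseqv := ⟨fun a => ⟨1, by simp [permIdx]⟩,
    fun {a b} ⟨σ, h⟩ => ⟨σ⁻¹, by rw [← h, permIdx_mul]; simp [permIdx]⟩,
    fun {a b c} ⟨σ, h⟩ ⟨τ, h'⟩ => ⟨τ * σ, by rw [← permIdx_mul, h, h']⟩⟩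

instance : DecidableRel (idxSetoid n).r := fun a b =>
  inferInstanceAs (Decidable (∃ σ : Equiv.Perm (Fin n), permIdx n σ a = b))

def Inv : Submodule ℝ (Idx n → ℝ) where
  carrier := {f | ∀ σ a, f (permIdx n σ a) = f a}
  zero_mem' := fun σ a => rfl
  add_mem' := fun hf hg σ a => by simp [Pi.add_apply, hf σ a, hg σ a]
  smul_mem' := fun c f hf σ a => by simp [Pi.smul_apply, hf σ a]

instance : DecidableRel (fun a b : Idx n => a ≈ b) := fun a b =>
  inferInstanceAs (Decidable (∃ σ : Equiv.Perm (Fin n), permIdx n σ a = b))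

instance : Fintype (Quotient (idxSetoid n)) := Quotient.fintype _

noncomputable def invEquiv : Inv n ≃ₗ[ℝ] (Quotient (idxSetoid n) → ℝ) where
  toFun f := Quotient.lift (f : Idx n → ℝ)
    (fun a b hab => by obtain ⟨σ, h⟩ := hab; rw [← h, f.2 σ a])
  map_add' f g := by funext q; induction q using Quotient.ind; rfl
  map_smul' c f := by funext q; induction q using Quotient.ind; rfl
  invFun g := ⟨fun a => g ⟦a⟧, fun σ a => by
    have h : (⟦permIdx n σ a⟧ : Quotient (idxSetoid n)) = ⟦a⟧ :=
      Quotient.sound ⟨σ⁻¹, by rw [permIdx_mul]; simp [permIdx]⟩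
    simp only [h]⟩
  left_inv f := by ext a; rfl
  right_inv g := by funext q; induction q using Quotient.ind; rfl

lemma act_stdBasisMatrix (σ : Equiv.Perm (Fin n)) (k l : Fin n) :
    act n σ (Matrix.single k l (1 : ℝ)) = Matrix.single (σ k) (σ l) 1 := by
  ext i j
  simp [act, Matrix.single, Equiv.Perm.inv_def, Equiv.eq_symm_apply]

def Tmap (f : Idx n → ℝ) : Matrix (Fin n) (Fin n) ℝ →ₗ[ℝ] Matrix (Fin n) (Fin n) ℝ where
  toFun X := Matrix.of fun i j => ∑ k, ∑ l, f (i, j, k, l) * X k l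
  map_add' X Y := by
    ext i j
    simp [Matrix.add_apply, mul_add, Finset.sum_add_distrib]
  map_smul' c X := by
    ext i j
    simp [Matrix.smul_apply, Finset.mul_sum, mul_left_comm]

lemma Tmap_equivariant (f : Idx n → ℝ) (hf : f ∈ Inv n)
    (σ : Equiv.Perm (Fin n)) (X : Matrix (Fin n) (Fin n) ℝ) :
    Tmap n f (act n σ X) = act n σ (Tmap n f X) := by
  ext i j
  show (∑ k, ∑ l, f (i, j, k, l) * X (σ⁻¹ k) (σ⁻¹ l))
      = ∑ k, ∑ l, f (σ⁻¹ i, σ⁻¹ j, k, l) * X k l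
  rw [← Equiv.sum_comp σ (fun k => ∑ l, f (i, j, k, l) * X (σ⁻¹ k) (σ⁻¹ l))]
  refine Finset.sum_congr rfl fun k _ => ?_
  rw [← Equiv.sum_comp σ (fun l => f (i, j, σ k, l) * X (σ⁻¹ (σ k)) (σ⁻¹ l))]
  refine Finset.sum_congr rfl fun l _ => ?_
  have := hf σ (σ⁻¹ i, σ⁻¹ j, k, l)
  simp only [permIdx] at this
  simp only [Equiv.Perm.inv_def, Equiv.symm_apply_apply, Equiv.apply_symm_apply] at this ⊢
  rw [this]

lemma Tmap_std (f : Idx n → ℝ) (a : Idx n) :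
    Tmap n f (Matrix.single a.2.2.1 a.2.2.2 1) a.1 a.2.1 = f a := by
  show (∑ k, ∑ l, f (a.1, a.2.1, k, l) * Matrix.single a.2.2.1 a.2.2.2 (1:ℝ) k l) = f a
  rw [Finset.sum_eq_single a.2.2.1]
  · rw [Finset.sum_eq_single a.2.2.2]
    · simp [Matrix.single]
    · intro l _ hl; simp [Matrix.single, Ne.symm hl]
    · simp
  · intro k _ hk
    apply Finset.sum_eq_zero
    intro l _; simp [Matrix.single, Ne.symm hk]
  · simp

lemma Tmap_left_inv (T : Matrix (Fin n) (Fin n) ℝ →ₗ[ℝ] Matrix (Fin n) (Fin n) ℝ) :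
    Tmap n (fun a => T (Matrix.single a.2.2.1 a.2.2.2 1) a.1 a.2.1) = T := by
  ext X i j
  show (∑ k, ∑ l, T (Matrix.single k l 1) i j * X k l) = T X i j
  conv_rhs => rw [matrix_eq_sum_single X]
  rw [map_sum]
  rw [Matrix.sum_apply]
  refine Finset.sum_congr rfl fun k _ => ?_
  rw [map_sum, Matrix.sum_apply]
  refine Finset.sum_congr rfl fun l _ => ?_
  have : Matrix.single k l (X k l) = (X k l) • Matrix.single k l (1:ℝ) := by
    rw [smul_single]; simp
  rw [this, _root_.map_smul]
  simp [mul_comm]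

noncomputable def eqvEquiv : EquivariantMaps n ≃ₗ[ℝ] Inv n where
  toFun T := ⟨fun a => T.1 (Matrix.single a.2.2.1 a.2.2.2 1) a.1 a.2.1, by
    intro σ a
    show T.1 (Matrix.single (σ a.2.2.1) (σ a.2.2.2) 1) (σ a.1) (σ a.2.1) = _
    rw [← act_stdBasisMatrix, T.2 σ]
    simp [act]⟩
  map_add' T T' := rfl
  map_smul' c T := rfl
  invFun f := ⟨Tmap n f, Tmap_equivariant n f f.2⟩
  left_inv T := by
    apply Subtype.ext
    exact Tmap_left_inv n T.1
  right_inv f := by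
    apply Subtype.ext
    funext a
    exact Tmap_std n f a

lemma finrank_eq_card :
    Module.finrank ℝ (EquivariantMaps n) = Fintype.card (Quotient (idxSetoid n)) := by
  rw [LinearEquiv.finrank_eq ((eqvEquiv n).trans (invEquiv n))]
  exact Module.finrank_fintype_fun_eq_card ℝ

set_option maxRecDepth 100000 in
/-- The space of `Sₙ`-equivariant linear endomorphisms of
`ℝⁿˣⁿ` has dimension 14 when `n = 3` and dimension 8 when `n = 2`. -/
theorem finrank_equivariantMaps_small_n :
    Module.finrank ℝ (EquivariantMaps 3) = 14 ∧
    Module.finrank ℝ (EquivariantMaps 2) = 8 := by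
  constructor
  · rw [finrank_eq_card]; decide
  · rw [finrank_eq_card]; decide


end IGN2small
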